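/- Let A, Â be real n × m matrices with rank(A) = p, σ_p(A) > 0, rank(Â) ≤ p, and ‖Â − A‖_op ≤ σ_p(A)/2. Then rank(Â) = p and σ_p(Â) ≥ σ_p(A)/2; consequently, any real m × n matrix B satisfying the Penrose equations for Â satisfies ‖B‖_op ≤ 2/σ_p(A). -/

import Mathlib

open Matrix

/-- Euclidean norm of a finitely indexed real vector. -/
noncomputable def euclNorm {m : Type*} [Fintype m] (v : m → ℝ) : ℝ :=
  Real.sqrt (∑ i, v i ^ 2)

/-- The `p`-th largest singular value of a real matrix, via the Courant–Fischer
max–min characterization. -/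
noncomputable def singularValue {n m : Type*} [Fintype n] [Fintype m] (p : ℕ)
    (A : Matrix n m ℝ) : ℝ :=
  sSup {r : ℝ | 0 ≤ r ∧ ∃ V : Submodule ℝ (m → ℝ), Module.finrank ℝ V = p ∧
    ∀ x ∈ V, r * euclNorm x ≤ euclNorm (A.mulVec x)}

/-- Operator (spectral) norm of a real matrix. -/
noncomputable def opNorm {n m : Type*} [Fintype n] [Fintype m] (A : Matrix n m ℝ) : ℝ :=
  sSup {r : ℝ | ∃ x : m → ℝ, euclNorm x ≤ 1 ∧ r = euclNorm (A.mulVec x)}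

/-- `B` satisfies the Moore–Penrose (Penrose) equations for `A`. -/
def IsPenroseInverse {n m : Type*} [Fintype n] [Fintype m]
    (A : Matrix n m ℝ) (B : Matrix m n ℝ) : Prop :=
  A * B * A = A ∧ B * A * B = B ∧ (A * B)ᵀ = A * B ∧ (B * A)ᵀ = B * A

/-! ### Auxiliary lemmas -/

set_option linter.unusedSectionVars false

open scoped Matrix.Norms.L2Operator

section EuclNormAux
variable {n m : Type*} [Fintype n] [Fintype m]

lemma euclNorm_eq (v : m → ℝ) :
    euclNorm v = ‖(WithLp.equiv 2 (m → ℝ)).symm v‖ := by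
  rw [euclNorm, EuclideanSpace.norm_eq]
  congr 1
  refine Finset.sum_congr rfl fun i _ => ?_
  rw [Real.norm_eq_abs, sq_abs]
  rfl

lemma euclNorm_nonneg (v : m → ℝ) : 0 ≤ euclNorm v :=
  Real.sqrt_nonneg _

lemma euclNorm_zero : euclNorm (0 : m → ℝ) = 0 := by
  simp [euclNorm]

lemma euclNorm_eq_zero {v : m → ℝ} (h : euclNorm v = 0) : v = 0 := by
  rw [euclNorm_eq] at h
  have := norm_eq_zero.mp h
  simpa using congrArg (WithLp.equiv 2 (m → ℝ)) this

lemma euclNorm_pos {v : m → ℝ} (h : v ≠ 0) : 0 < euclNorm v :=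
  lt_of_le_of_ne (euclNorm_nonneg v) fun h' => h (euclNorm_eq_zero h'.symm)

lemma euclNorm_smul (c : ℝ) (v : m → ℝ) :
    euclNorm (c • v) = |c| * euclNorm v := by
  rw [euclNorm_eq, euclNorm_eq, ← Real.norm_eq_abs, ← norm_smul]
  congr 1

lemma euclNorm_sub_le (u v : m → ℝ) :
    euclNorm (u - v) ≤ euclNorm u + euclNorm v := by
  rw [euclNorm_eq, euclNorm_eq, euclNorm_eq]
  exact norm_sub_le _ _

lemma euclNorm_mulVec_le [DecidableEq m] (M : Matrix n m ℝ) (x : m → ℝ) :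
    euclNorm (M.mulVec x) ≤ ‖M‖ * euclNorm x := by
  rw [euclNorm_eq, euclNorm_eq]
  exact M.l2_opNorm_mulVec ((WithLp.equiv 2 (m → ℝ)).symm x)

lemma dotProduct_le_euclNorm (v w : m → ℝ) : v ⬝ᵥ w ≤ euclNorm v * euclNorm w := by
  have h := real_inner_le_norm ((WithLp.equiv 2 (m → ℝ)).symm v) ((WithLp.equiv 2 (m → ℝ)).symm w)
  have hi : (inner ℝ ((WithLp.equiv 2 (m → ℝ)).symm v) ((WithLp.equiv 2 (m → ℝ)).symm w) : ℝ)
      = v ⬝ᵥ w := by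
    rw [PiLp.inner_apply]
    simp [dotProduct, RCLike.inner_apply, mul_comm]
  rw [hi] at h
  rw [euclNorm_eq, euclNorm_eq]
  exact h

lemma euclNorm_sq (v : m → ℝ) : euclNorm v * euclNorm v = v ⬝ᵥ v := by
  rw [euclNorm, Real.mul_self_sqrt (by positivity : (0:ℝ) ≤ ∑ i, v i ^ 2)]
  simp [dotProduct, sq]

end EuclNormAux

section OpNormAux
variable {n m : Type*} [Fintype n] [Fintype m] [DecidableEq m]

lemma zero_mem_opSet (M : Matrix n m ℝ) :
    (0:ℝ) ∈ {r : ℝ | ∃ x : m → ℝ, euclNorm x ≤ 1 ∧ r = euclNorm (M.mulVec x)} :=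
  ⟨0, by simp [euclNorm_zero, Matrix.mulVec_zero]⟩

lemma opSet_bddAbove (M : Matrix n m ℝ) :
    BddAbove {r : ℝ | ∃ x : m → ℝ, euclNorm x ≤ 1 ∧ r = euclNorm (M.mulVec x)} := by
  refine ⟨‖M‖, ?_⟩
  rintro r ⟨x, hx, rfl⟩
  calc euclNorm (M.mulVec x) ≤ ‖M‖ * euclNorm x := euclNorm_mulVec_le M x
    _ ≤ ‖M‖ * 1 := mul_le_mul_of_nonneg_left hx (norm_nonneg M)
    _ = ‖M‖ := mul_one _

lemma opNorm_nonneg (M : Matrix n m ℝ) : 0 ≤ opNorm M :=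
  le_csSup (opSet_bddAbove M) (zero_mem_opSet M)

lemma euclNorm_mulVec_le_opNorm (M : Matrix n m ℝ) (x : m → ℝ) :
    euclNorm (M.mulVec x) ≤ opNorm M * euclNorm x := by
  rcases eq_or_ne x 0 with rfl | hx
  · simp [Matrix.mulVec_zero, euclNorm_zero]
  · have hpos : 0 < euclNorm x := euclNorm_pos hx
    set u : m → ℝ := (euclNorm x)⁻¹ • x with hu
    have hnu : euclNorm u = 1 := by
      rw [hu, euclNorm_smul, abs_of_nonneg (inv_nonneg.mpr hpos.le), inv_mul_cancel₀ hpos.ne']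
    have hmem : euclNorm (M.mulVec u) ∈
        {r : ℝ | ∃ x : m → ℝ, euclNorm x ≤ 1 ∧ r = euclNorm (M.mulVec x)} :=
      ⟨u, hnu.le, rfl⟩
    have hle : euclNorm (M.mulVec u) ≤ opNorm M := le_csSup (opSet_bddAbove M) hmem
    have heq : euclNorm (M.mulVec u) = (euclNorm x)⁻¹ * euclNorm (M.mulVec x) := by
      rw [hu, Matrix.mulVec_smul, euclNorm_smul, abs_of_nonneg (inv_nonneg.mpr hpos.le)]
    rw [heq] at hle
    calc euclNorm (M.mulVec x) = euclNorm x * ((euclNorm x)⁻¹ * euclNorm (M.mulVec x)) := by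
          field_simp
      _ ≤ euclNorm x * opNorm M := mul_le_mul_of_nonneg_left hle hpos.le
      _ = opNorm M * euclNorm x := mul_comm _ _

lemma opNorm_le (M : Matrix n m ℝ) {C : ℝ}
    (h : ∀ x : m → ℝ, euclNorm x ≤ 1 → euclNorm (M.mulVec x) ≤ C) : opNorm M ≤ C := by
  refine csSup_le ⟨0, zero_mem_opSet M⟩ ?_
  rintro r ⟨x, hx, rfl⟩
  exact h x hx

end OpNormAux

section SVAux
variable {n m : Type*} [Fintype n] [Fintype m] [DecidableEq m]

lemma svSet_bddAbove (M : Matrix n m ℝ) {p : ℕ} (hp : 0 < p) :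
    BddAbove {r : ℝ | 0 ≤ r ∧ ∃ V : Submodule ℝ (m → ℝ), Module.finrank ℝ V = p ∧
      ∀ x ∈ V, r * euclNorm x ≤ euclNorm (M.mulVec x)} := by
  refine ⟨‖M‖, ?_⟩
  rintro r ⟨hr0, V, hVp, hV⟩
  have hVne : V ≠ ⊥ := by
    intro h
    rw [h] at hVp
    simp at hVp
    omega
  obtain ⟨x, hxV, hx0⟩ := Submodule.exists_mem_ne_zero_of_ne_bot hVne
  have h1 : r * euclNorm x ≤ euclNorm (M.mulVec x) := hV x hxV
  have h2 : euclNorm (M.mulVec x) ≤ ‖M‖ * euclNorm x := euclNorm_mulVec_le M x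
  have hpos : 0 < euclNorm x := euclNorm_pos hx0
  nlinarith

lemma sv_pos_p {p : ℕ} (M : Matrix n m ℝ) (h : 0 < singularValue p M) : 0 < p := by
  by_contra hp
  push_neg at hp
  interval_cases p
  have hub : ¬ BddAbove {r : ℝ | 0 ≤ r ∧ ∃ V : Submodule ℝ (m → ℝ), Module.finrank ℝ V = 0 ∧
      ∀ x ∈ V, r * euclNorm x ≤ euclNorm (M.mulVec x)} := by
    intro ⟨b, hb⟩
    have hball : ∀ r : ℝ, 0 ≤ r → r ≤ b := by
      intro r hr
      refine hb ⟨hr, ⊥, by simp, ?_⟩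
      intro x hx
      rw [Submodule.mem_bot] at hx
      subst hx
      simp [euclNorm_zero, Matrix.mulVec_zero, euclNorm_nonneg]
    have h1 := hball (max b 0 + 1) (by positivity)
    have := le_max_left b 0
    linarith
  rw [singularValue, Real.sSup_of_not_bddAbove hub] at h
  exact lt_irrefl _ h

lemma sv_set_nonempty {p : ℕ} (M : Matrix n m ℝ) (h : 0 < singularValue p M) :
    Set.Nonempty {r : ℝ | 0 ≤ r ∧ ∃ V : Submodule ℝ (m → ℝ), Module.finrank ℝ V = p ∧
      ∀ x ∈ V, r * euclNorm x ≤ euclNorm (M.mulVec x)} := by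
  by_contra hne
  rw [Set.not_nonempty_iff_eq_empty] at hne
  rw [singularValue, hne, Real.sSup_empty] at h
  exact lt_irrefl _ h

end SVAux

section RankAux
variable {n m : Type*} [Fintype n] [Fintype m]

lemma rank_ge_of_lower_bound (M : Matrix n m ℝ) {p : ℕ} {c : ℝ} (hc : 0 < c)
    (V : Submodule ℝ (m → ℝ)) (hVp : Module.finrank ℝ V = p)
    (hV : ∀ x ∈ V, c * euclNorm x ≤ euclNorm (M.mulVec x)) : p ≤ M.rank := by
  set f : V →ₗ[ℝ] (n → ℝ) := M.mulVecLin.comp V.subtype with hf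
  have hinj : Function.Injective f := by
    rw [← LinearMap.ker_eq_bot, Submodule.eq_bot_iff]
    rintro ⟨x, hxV⟩ hx
    have hfx : M.mulVec x = 0 := hx
    have := hV x hxV
    rw [hfx, euclNorm_zero] at this
    have hx0 : euclNorm x = 0 :=
      le_antisymm (by nlinarith [euclNorm_nonneg x]) (euclNorm_nonneg x)
    exact Subtype.ext (euclNorm_eq_zero hx0)
  have h1 : Module.finrank ℝ (LinearMap.range f) = p := by
    rw [LinearMap.finrank_range_of_inj hinj, hVp]
  have h2 : LinearMap.range f ≤ LinearMap.range M.mulVecLin := by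
    rw [hf, LinearMap.range_comp]
    exact LinearMap.map_le_range
  calc p = Module.finrank ℝ (LinearMap.range f) := h1.symm
    _ ≤ Module.finrank ℝ (LinearMap.range M.mulVecLin) := Submodule.finrank_mono h2
    _ = M.rank := rfl

lemma map_eq_range_of_inj (P : Matrix m m ℝ) {p : ℕ} (hrank : P.rank = p)
    (V : Submodule ℝ (m → ℝ)) (hVp : Module.finrank ℝ V = p)
    (hinj : ∀ x ∈ V, P.mulVec x = 0 → x = 0) :
    Submodule.map P.mulVecLin V = LinearMap.range P.mulVecLin := by
  set f : V →ₗ[ℝ] (m → ℝ) := P.mulVecLin.comp V.subtype with hf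
  have hrangef : LinearMap.range f = Submodule.map P.mulVecLin V := by
    rw [hf, LinearMap.range_comp, Submodule.range_subtype]
  have hinjf : Function.Injective f := by
    rw [← LinearMap.ker_eq_bot, Submodule.eq_bot_iff]
    rintro ⟨x, hxV⟩ hx
    exact Subtype.ext (hinj x hxV hx)
  have h1 : Module.finrank ℝ (Submodule.map P.mulVecLin V) = p := by
    rw [← hrangef, LinearMap.finrank_range_of_inj hinjf, hVp]
  refine Submodule.eq_of_le_of_finrank_le (LinearMap.map_le_range) ?_
  have h2 : Module.finrank ℝ (LinearMap.range P.mulVecLin) = P.rank := rfl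
  rw [h1, h2, hrank]

lemma symm_idem_contraction (Q : Matrix m m ℝ)
    (hsym : Qᵀ = Q) (hidem : Q * Q = Q) (y : m → ℝ) :
    euclNorm (Q.mulVec y) ≤ euclNorm y := by
  set z := Q.mulVec y with hz
  have h1 : z ⬝ᵥ z = y ⬝ᵥ z := by
    calc z ⬝ᵥ z = (z ᵥ* Q) ⬝ᵥ y := by rw [hz, dotProduct_mulVec]
      _ = (Qᵀ *ᵥ z) ⬝ᵥ y := by rw [← mulVec_transpose]
      _ = (Q *ᵥ z) ⬝ᵥ y := by rw [hsym]
      _ = ((Q * Q) *ᵥ y) ⬝ᵥ y := by rw [hz, mulVec_mulVec]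
      _ = z ⬝ᵥ y := by rw [hidem]
      _ = y ⬝ᵥ z := dotProduct_comm _ _
  have h2 : euclNorm z * euclNorm z ≤ euclNorm y * euclNorm z := by
    rw [euclNorm_sq, h1]
    exact dotProduct_le_euclNorm y z
  rcases eq_or_lt_of_le (euclNorm_nonneg z) with h | h
  · rw [← h]; exact euclNorm_nonneg y
  · exact le_of_mul_le_mul_right h2 h

end RankAux

/-- If `rank A = p`, `σ_p(A) > 0`, `rank Â ≤ p` and
`‖Â − A‖_op ≤ σ_p(A)/2`, then `rank Â = p`, `σ_p(Â) ≥ σ_p(A)/2`, and any pseudoinverse `B`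
of `Â` (satisfying the Penrose equations) has `‖B‖_op ≤ 2/σ_p(A)`. -/
theorem rank_and_pinv_opNorm_of_opNorm_perturbation
    {n m p : ℕ} (A Ahat : Matrix (Fin n) (Fin m) ℝ)
    (hrankA : A.rank = p) (hσA : 0 < singularValue p A)
    (hrankAhat : Ahat.rank ≤ p)
    (hpert : opNorm (Ahat - A) ≤ singularValue p A / 2) :
    Ahat.rank = p ∧ singularValue p A / 2 ≤ singularValue p Ahat ∧
      ∀ B : Matrix (Fin m) (Fin n) ℝ, IsPenroseInverse Ahat B →
        opNorm B ≤ 2 / singularValue p A := by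
  classical
  set σ := singularValue p A with hσdef
  have hp : 0 < p := sv_pos_p A hσA
  have hSAne := sv_set_nonempty A hσA
  have hbddAh := svSet_bddAbove Ahat hp
  -- Step 1 : the singular value of the perturbed matrix
  have hstep1 : σ / 2 ≤ singularValue p Ahat := by
    refine le_of_forall_lt fun c hc => ?_
    have h2 : c + σ / 2 < σ := by linarith
    obtain ⟨r, hrmem, hrgt⟩ := exists_lt_of_lt_csSup hSAne h2
    obtain ⟨hr0, V, hVp, hV⟩ := hrmem
    set d := opNorm (Ahat - A) with hd
    have hs_mem : max (r - d) 0 ∈ {r : ℝ | 0 ≤ r ∧ ∃ V : Submodule ℝ (Fin m → ℝ),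
        Module.finrank ℝ V = p ∧ ∀ x ∈ V, r * euclNorm x ≤ euclNorm (Ahat.mulVec x)} := by
      refine ⟨le_max_right _ _, V, hVp, fun x hx => ?_⟩
      have hA := hV x hx
      have hΔ : euclNorm ((Ahat - A).mulVec x) ≤ d * euclNorm x :=
        euclNorm_mulVec_le_opNorm _ x
      have htri : euclNorm (A.mulVec x)
          ≤ euclNorm (Ahat.mulVec x) + euclNorm ((Ahat - A).mulVec x) := by
        have hAx : A.mulVec x = Ahat.mulVec x - (Ahat - A).mulVec x := by
          rw [Matrix.sub_mulVec]; abel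
        rw [hAx]
        exact euclNorm_sub_le _ _
      rcases max_cases (r - d) 0 with ⟨h1, _⟩ | ⟨h1, _⟩
      · rw [h1]; nlinarith [euclNorm_nonneg x]
      · rw [h1, zero_mul]; exact euclNorm_nonneg _
    have hlt : c < max (r - d) 0 := by
      have hdle : d ≤ σ / 2 := hpert
      have : c < r - d := by linarith
      exact lt_max_of_lt_left this
    exact lt_of_lt_of_le hlt (le_csSup hbddAh hs_mem)
  have hsAh : 0 < singularValue p Ahat := lt_of_lt_of_le (half_pos hσA) hstep1
  have hSAhne := sv_set_nonempty Ahat hsAh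
  -- Step 2 : the rank
  have hrank : Ahat.rank = p := by
    obtain ⟨c, hcmem, hcpos⟩ := exists_lt_of_lt_csSup hSAhne hsAh
    obtain ⟨hc0, V, hVp, hV⟩ := hcmem
    exact le_antisymm hrankAhat (rank_ge_of_lower_bound Ahat hcpos V hVp hV)
  refine ⟨hrank, hstep1, fun B hB => ?_⟩
  -- Step 3 : the pseudoinverse bound
  obtain ⟨h1, h2, h3, h4⟩ := hB
  set P := B * Ahat with hP
  have hPsym : Pᵀ = P := h4
  have hPidem : P * P = P := by
    calc P * P = P * (B * Ahat) := by rw [← hP]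
      _ = (P * B) * Ahat := (Matrix.mul_assoc P B Ahat).symm
      _ = B * Ahat := by rw [h2]
      _ = P := hP.symm
  have hQidem : (Ahat * B) * (Ahat * B) = Ahat * B := by
    rw [← Matrix.mul_assoc, h1]
  have hAhP : Ahat * P = Ahat := by rw [hP, ← Matrix.mul_assoc]; exact h1
  have hrankP : P.rank = p := by
    apply le_antisymm
    · rw [hP]; exact (Matrix.rank_mul_le_right B Ahat).trans (le_of_eq hrank)
    · calc p = Ahat.rank := hrank.symm
        _ = (Ahat * P).rank := by rw [hAhP]
        _ ≤ P.rank := Matrix.rank_mul_le_right _ _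
  have hxb : ∀ y : Fin n → ℝ, euclNorm y ≤ 1 → euclNorm (B.mulVec y) ≤ 2 / σ := by
    intro y hy
    set x := B.mulVec y with hx
    have hPx : P.mulVec x = x := by
      rw [hx, mulVec_mulVec, h2]
    have hAhx : euclNorm (Ahat.mulVec x) ≤ 1 := by
      have hq : Ahat.mulVec x = (Ahat * B).mulVec y := by rw [hx, mulVec_mulVec]
      rw [hq]
      exact (symm_idem_contraction _ h3 hQidem y).trans hy
    have hkey : ∀ c ∈ {r : ℝ | 0 ≤ r ∧ ∃ V : Submodule ℝ (Fin m → ℝ),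
        Module.finrank ℝ V = p ∧ ∀ z ∈ V, r * euclNorm z ≤ euclNorm (Ahat.mulVec z)},
        c * euclNorm x ≤ 1 := by
      rintro c ⟨hc0, V, hVp, hV⟩
      rcases eq_or_lt_of_le hc0 with hzero | hcpos
      · rw [← hzero, zero_mul]; exact zero_le_one
      · have hinjP : ∀ v ∈ V, P.mulVec v = 0 → v = 0 := by
          intro v hvV hPv
          have hAv : Ahat.mulVec v = 0 := by
            have hv1 : Ahat.mulVec v = (Ahat * P).mulVec v := by rw [hAhP]
            rw [hv1, ← mulVec_mulVec, hPv, mulVec_zero]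
          have hlow := hV v hvV
          rw [hAv, euclNorm_zero] at hlow
          have hv0 : euclNorm v = 0 :=
            le_antisymm (by nlinarith [euclNorm_nonneg v]) (euclNorm_nonneg v)
          exact euclNorm_eq_zero hv0
        have hmapeq := map_eq_range_of_inj P hrankP V hVp hinjP
        have hxmem : x ∈ Submodule.map P.mulVecLin V := by
          rw [hmapeq]
          exact ⟨x, hPx⟩
        obtain ⟨v, hvV, hvx⟩ := hxmem
        have hvx' : P.mulVec v = x := hvx
        have hcontr : euclNorm x ≤ euclNorm v := by
          rw [← hvx']; exact symm_idem_contraction P hPsym hPidem v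
        have hlow := hV v hvV
        have hAPv : Ahat.mulVec v = Ahat.mulVec x := by
          rw [← hvx', mulVec_mulVec, hAhP]
        calc c * euclNorm x ≤ c * euclNorm v := mul_le_mul_of_nonneg_left hcontr hc0
          _ ≤ euclNorm (Ahat.mulVec v) := hlow
          _ = euclNorm (Ahat.mulVec x) := by rw [hAPv]
          _ ≤ 1 := hAhx
    rcases eq_or_lt_of_le (euclNorm_nonneg x) with hx0 | hx0
    · rw [← hx0]
      positivity
    · have hs : singularValue p Ahat ≤ 1 / euclNorm x := by
        refine csSup_le hSAhne fun c hc => ?_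
        rw [le_div_iff₀ hx0]
        exact hkey c hc
      have hcomb := hstep1.trans hs
      rw [le_div_iff₀ hx0] at hcomb
      rw [le_div_iff₀ hσA]
      nlinarith
  exact opNorm_le B hxb
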